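/- A left R-module M is supplemented (every submodule has a supplement) if and only if for every submodule X of M there exists a submodule Y of M such that X + Y = M, X ∩ Y ⊆ Rad(Y), and X ∩ Y is PSD in Y. -/

import Mathlib

open Submodule Function

/-- A submodule `N` of `M` is PSD in `M` if whenever `N + X = M`, there is a
projective direct summand `S` of `M` with `S ≤ N` and `M = S ⊕ X`. -/
def IsPSD (R : Type*) [Ring R] {M : Type*} [AddCommGroup M] [Module R M]
    (N : Submodule R M) : Prop :=
  ∀ X : Submodule R M, N ⊔ X = ⊤ →
    ∃ S : Submodule R M, S ≤ N ∧ Module.Projective R ↥S ∧ IsCompl S X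

/-- `N` is small in `M`: `N + L = M` implies `L = M`. -/
def IsSmallSub (R : Type*) [Ring R] {M : Type*} [AddCommGroup M] [Module R M]
    (N : Submodule R M) : Prop :=
  ∀ L : Submodule R M, N ⊔ L = ⊤ → L = ⊤

/-- The (Jacobson) radical of a module: intersection of all maximal submodules. -/
def radM (R M : Type*) [Ring R] [AddCommGroup M] [Module R M] : Submodule R M :=
  sInf {m : Submodule R M | IsCoatom m}

/-- `M` is supplemented: every submodule `X` has a submodule `Y` with `X + Y = M`
and `X ∩ Y` small in `Y`. -/
def IsSupplemented (R M : Type*) [Ring R] [AddCommGroup M] [Module R M] : Prop :=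
  ∀ X : Submodule R M, ∃ Y : Submodule R M, X ⊔ Y = ⊤ ∧
    IsSmallSub R (Submodule.comap Y.subtype X)

/-- `M` is lifting: every submodule `N` admits a decomposition `M = A ⊕ B` with
`A ≤ N` and `N ∩ B` small in `B`. -/
def IsLifting (R M : Type*) [Ring R] [AddCommGroup M] [Module R M] : Prop :=
  ∀ N : Submodule R M, ∃ A B : Submodule R M, IsCompl A B ∧ A ≤ N ∧
    IsSmallSub R (Submodule.comap B.subtype N)

/-- `Y` is an `I`-supplement of `X` in `M`: `X + Y = M`, `X ∩ Y ⊆ IY`, and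
`X ∩ Y` is PSD in `Y`. -/
def IsISupplementOf {R : Type*} [Ring R] {M : Type*} [AddCommGroup M] [Module R M]
    (I : Ideal R) (Y X : Submodule R M) : Prop :=
  X ⊔ Y = ⊤ ∧ X ⊓ Y ≤ I • Y ∧ IsPSD R (Submodule.comap Y.subtype X)

/-- `M` is `I`-supplemented: every submodule has an `I`-supplement in `M`. -/
def IsISupplemented {R : Type*} [Ring R] (I : Ideal R) (M : Type*)
    [AddCommGroup M] [Module R M] : Prop :=
  ∀ X : Submodule R M, ∃ Y : Submodule R M, IsISupplementOf I Y X

section Aux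
variable {R : Type*} [Ring R]

theorem radM_le_coatom {M : Type*} [AddCommGroup M] [Module R M]
    {m : Submodule R M} (hm : IsCoatom m) : radM R M ≤ m :=
  sInf_le hm

theorem comap_coatom {M N : Type*} [AddCommGroup M] [Module R M]
    [AddCommGroup N] [Module R N] (f : M →ₗ[R] N) {m : Submodule R N}
    (hm : IsCoatom m) (h : m.comap f ≠ ⊤) : IsCoatom (m.comap f) := by
  refine ⟨h, fun K hK => ?_⟩
  obtain ⟨k, hkK, hkm⟩ := SetLike.exists_of_lt hK
  have hfk : f k ∉ m := hkm
  have hsup : m ⊔ Submodule.span R {f k} = ⊤ := by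
    refine hm.2 _ (lt_of_le_of_ne le_sup_left fun hEq => hfk ?_)
    rw [hEq]
    exact Submodule.mem_sup_right (Submodule.mem_span_singleton_self (f k))
  rw [eq_top_iff']
  intro z
  have : f z ∈ m ⊔ Submodule.span R {f k} := by rw [hsup]; trivial
  obtain ⟨y, hy, c, hc, hyc⟩ := Submodule.mem_sup.1 this
  obtain ⟨r, hr⟩ := Submodule.mem_span_singleton.1 hc
  have hz : z - r • k ∈ m.comap f := by
    simp only [Submodule.mem_comap, map_sub, map_smul]
    rw [hr, ← hyc]; simpa using hy
  have : z = (z - r • k) + r • k := by abel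
  rw [this]
  exact K.add_mem (hK.le hz) (K.smul_mem r hkK)

theorem radM_map_mem {M N : Type*} [AddCommGroup M] [Module R M]
    [AddCommGroup N] [Module R N] (f : M →ₗ[R] N) {x : M}
    (hx : x ∈ radM R M) : f x ∈ radM R N := by
  refine Submodule.mem_sInf.2 fun m hm => ?_
  by_cases htop : m.comap f = ⊤
  · have : x ∈ m.comap f := htop ▸ Submodule.mem_top
    exact this
  · exact radM_le_coatom (comap_coatom f hm htop) hx

theorem radM_mul_mem {a : R} (ha : a ∈ radM R R) (r : R) : a * r ∈ radM R R := by
  have := radM_map_mem (LinearMap.toSpanSingleton R R r) ha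
  simpa [LinearMap.toSpanSingleton_apply, smul_eq_mul] using this

theorem radM_left_inv {c : R} (hc : c ∈ radM R R) : ∃ d, d * (1 - c) = 1 := by
  have hspan : Ideal.span {1 - c} = ⊤ := by
    by_contra h
    obtain ⟨m, hmmax, hle⟩ := Ideal.exists_le_maximal _ h
    have hcm : IsCoatom m := Ideal.isMaximal_def.1 hmmax
    have h1 : (1 : R) ∈ m := by
      have := m.add_mem (hle (Ideal.mem_span_singleton_self _)) (radM_le_coatom hcm hc)
      simpa using this
    exact hcm.1 ((Ideal.eq_top_iff_one m).2 h1)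
  have : (1 : R) ∈ Ideal.span {1 - c} := hspan ▸ Submodule.mem_top
  obtain ⟨d, hd⟩ := Submodule.mem_span_singleton.1 this
  exact ⟨d, by simpa [smul_eq_mul] using hd⟩

theorem radM_right_inv {c : R} (hc : c ∈ radM R R) : ∃ d, (1 - c) * d = 1 := by
  obtain ⟨d, hd⟩ := radM_left_inv hc
  have hdc : -(d * c) ∈ radM R R := by
    exact (radM R R).neg_mem ((radM R R).smul_mem d hc)
  obtain ⟨e, he⟩ := radM_left_inv hdc
  have hd' : (1 : R) - -(d * c) = d := by
    have h1 : d - d * c = 1 := by rw [← mul_one d, mul_assoc, ← mul_sub]; simpa using hd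
    have h2 : d = 1 + d * c := by rw [← h1]; abel
    rw [sub_neg_eq_add, ← h2]
  rw [hd'] at he
  have hed : e = 1 - c := by
    calc e = e * (d * (1 - c)) := by rw [hd, mul_one]
    _ = (e * d) * (1 - c) := by rw [mul_assoc]
    _ = 1 - c := by rw [he, one_mul]
  exact ⟨d, by rw [← hed]; exact he⟩


theorem bass_aux {P : Type*} [AddCommGroup P] [Module R P] :
    ∀ (n : ℕ) (ι : P →ₗ[R] (P →₀ R)) (π : (P →₀ R) →ₗ[R] P),
      (∀ x, π (ι x) = x) → (∀ x a, ι x a ∈ radM R R) →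
      ∀ x : P, (ι x).support.card ≤ n → x = 0 := by
  intro n
  induction n with
  | zero =>
    intro ι π hsec hJ x hcard
    have h0 : ι x = 0 := by
      rw [← Finsupp.support_eq_empty]
      exact Finset.card_eq_zero.1 (Nat.le_zero.1 hcard)
    rw [← hsec x, h0, map_zero]
  | succ n ih =>
    intro ι π hsec hJ x hcard
    classical
    by_cases hx0 : ι x = 0
    · rw [← hsec x, hx0, map_zero]
    obtain ⟨a₀, ha₀⟩ := Finsupp.support_nonempty_iff.2 hx0
    set w := ι x with hw
    set T := w.support with hT
    set c : P → R := fun b => ι (π (Finsupp.single b 1)) a₀ with hcdef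
    have hc : ∀ b : P, c b ∈ radM R R := fun b => hJ _ _
    have hdecomp : ∀ v : P →₀ R, v = ∑ a ∈ v.support, (v a) • Finsupp.single a (1:R) := by
      intro v
      conv_lhs => rw [← Finsupp.sum_single v]
      rw [Finsupp.sum]
      refine Finset.sum_congr rfl fun a _ => ?_
      rw [Finsupp.smul_single', mul_one]
    have hπw : ι (π w) = w := by rw [hw, hsec]
    have hkey : w a₀ = ∑ a ∈ T, w a * c a := by
      calc w a₀ = ι (π w) a₀ := by rw [hπw]
      _ = ∑ a ∈ T, w a * c a := by
          conv_lhs => rw [hdecomp w]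
          rw [map_sum, map_sum, Finsupp.finset_sum_apply]
          exact Finset.sum_congr rfl fun a _ => by
            rw [map_smul, map_smul, Finsupp.smul_apply, smul_eq_mul]
    obtain ⟨d, hd⟩ := radM_right_inv (hc a₀)
    set t : P → R := fun a => c a * d with htdef
    have hkey2 : w a₀ = ∑ a ∈ T.erase a₀, w a * t a := by
      have hsplit : ∑ a ∈ T, w a * c a
          = w a₀ * c a₀ + ∑ a ∈ T.erase a₀, w a * c a :=
        (Finset.add_sum_erase T _ ha₀).symm
      have h2 : w a₀ * (1 - c a₀) = ∑ a ∈ T.erase a₀, w a * c a := by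
        rw [mul_sub, mul_one]
        nth_rewrite 1 [hkey]
        rw [hsplit, add_sub_cancel_left]
      calc w a₀ = w a₀ * ((1 - c a₀) * d) := by rw [hd, mul_one]
      _ = (w a₀ * (1 - c a₀)) * d := by rw [mul_assoc]
      _ = (∑ a ∈ T.erase a₀, w a * c a) * d := by rw [h2]
      _ = ∑ a ∈ T.erase a₀, w a * t a := by
          rw [Finset.sum_mul]
          exact Finset.sum_congr rfl fun a _ => (mul_assoc _ _ _)
    set φ : (P →₀ R) →ₗ[R] R :=
      ∑ a ∈ T.erase a₀, (LinearMap.toSpanSingleton R R (t a)).comp (Finsupp.lapply a) with hφdef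
    have hφapp : ∀ v : P →₀ R, φ v = ∑ a ∈ T.erase a₀, v a * t a := fun v => by
      rw [hφdef, LinearMap.sum_apply]
      exact Finset.sum_congr rfl fun a _ => by
        simp [LinearMap.toSpanSingleton_apply, smul_eq_mul]
    have hφJ : ∀ z : P, φ (ι z) ∈ radM R R := fun z => by
      rw [hφapp]
      exact Submodule.sum_mem _ fun a _ => radM_mul_mem (hJ z a) (t a)
    set e₀ : P →₀ R := Finsupp.single a₀ (1:R) with he₀
    have hφe₀ : φ e₀ = 0 := by
      rw [hφapp]
      refine Finset.sum_eq_zero fun a ha => ?_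
      rw [he₀, Finsupp.single_eq_of_ne (Finset.ne_of_mem_erase ha), zero_mul]
    let ι' : P →ₗ[R] (P →₀ R) :=
      { toFun := fun z => ι z - φ (ι z) • e₀
        map_add' := fun y z => by simp only [map_add, add_smul]; abel
        map_smul' := fun r z => by
          simp only [map_smul, RingHom.id_apply, smul_sub, smul_eq_mul, smul_smul] }
    let π' : (P →₀ R) →ₗ[R] P :=
      { toFun := fun v => π v + φ v • π e₀
        map_add' := fun y z => by simp only [map_add, add_smul]; abel
        map_smul' := fun r v => by
          simp only [map_smul, RingHom.id_apply, smul_add, smul_eq_mul, smul_smul] }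
    have hι'app : ∀ z, ι' z = ι z - φ (ι z) • e₀ := fun z => rfl
    have hπ'app : ∀ v, π' v = π v + φ v • π e₀ := fun v => rfl
    have hsec' : ∀ z, π' (ι' z) = z := by
      intro z
      rw [hι'app, hπ'app, map_sub, map_sub, map_smul, map_smul, hφe₀, smul_zero, sub_zero]
      have hz : ∀ (a b : P), a - b + b = a := fun a b => by abel
      rw [hz]
      exact hsec z
    have hJ' : ∀ z a, ι' z a ∈ radM R R := by
      intro z a
      rw [hι'app, Finsupp.sub_apply, Finsupp.smul_apply, smul_eq_mul]
      exact Submodule.sub_mem _ (hJ z a) (radM_mul_mem (hφJ z) _)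
    have hφw : φ w = w a₀ := by rw [hφapp, hkey2]
    have hsub : (ι' x).support ⊆ T.erase a₀ := by
      intro a ha
      rw [Finsupp.mem_support_iff] at ha
      rw [hι'app, Finsupp.sub_apply, Finsupp.smul_apply, smul_eq_mul, ← hw] at ha
      by_cases haa : a = a₀
      · exfalso
        apply ha
        rw [haa, hφw, he₀, Finsupp.single_eq_same, mul_one, sub_self]
      · refine Finset.mem_erase.2 ⟨haa, ?_⟩
        rw [he₀, Finsupp.single_eq_of_ne haa, mul_zero, sub_zero] at ha
        exact Finsupp.mem_support_iff.2 ha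
    refine ih ι' π' hsec' hJ' x ?_
    have h1 : (ι' x).support.card ≤ (T.erase a₀).card := Finset.card_le_card hsub
    have h2 : (T.erase a₀).card = T.card - 1 := Finset.card_erase_of_mem ha₀
    have h3 : T.card ≤ n + 1 := hcard
    omega

theorem bass {P : Type*} [AddCommGroup P] [Module R P] (hproj : Module.Projective R P)
    (h : radM R P = ⊤) (x : P) : x = 0 := by
  obtain ⟨s, hs⟩ := Module.projective_def.1 hproj
  have hJ : ∀ y a, s y a ∈ radM R R := by
    intro y a
    have hy : y ∈ radM R P := by rw [h]; trivial
    have := radM_map_mem ((Finsupp.lapply a).comp s) hy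
    simpa using this
  exact bass_aux ((s x).support.card) s (Finsupp.linearCombination R id) hs hJ x le_rfl

end Aux

theorem isSmall_le_radM {R : Type*} [Ring R] {M : Type*} [AddCommGroup M] [Module R M]
    {N : Submodule R M} (h : IsSmallSub R N) : N ≤ radM R M := by
  refine le_sInf fun m hm => ?_
  by_contra hnm
  have hsup : m ⊔ N = ⊤ := hm.2 _ (left_lt_sup.2 hnm)
  exact hm.1 (h m (by rwa [sup_comm] at hsup))

theorem stmt7 {R M : Type*} [Ring R] [AddCommGroup M] [Module R M] :
    IsSupplemented R M ↔
      ∀ X : Submodule R M, ∃ Y : Submodule R M, X ⊔ Y = ⊤ ∧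
        Submodule.comap Y.subtype X ≤ radM R ↥Y ∧
        IsPSD R (Submodule.comap Y.subtype X) := by
  constructor
  · intro hsupp X
    obtain ⟨Y, hY, hsmall⟩ := hsupp X
    refine ⟨Y, hY, isSmall_le_radM hsmall, fun X' hX' => ?_⟩
    refine ⟨⊥, bot_le, inferInstance, ?_⟩
    rw [hsmall X' hX']
    exact isCompl_bot_top
  · intro h X
    obtain ⟨Y, hY, hrad, hpsd⟩ := h X
    refine ⟨Y, hY, fun X' hX' => ?_⟩
    obtain ⟨S, hSN, hproj, hcompl⟩ := hpsd X' hX'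
    have hStop : radM R ↥S = ⊤ := by
      rw [eq_top_iff]
      intro s _
      have h1 : (s : ↥Y) ∈ radM R ↥Y := hrad (hSN s.2)
      have h2 := radM_map_mem (Submodule.projectionOnto S X' hcompl) h1
      rwa [Submodule.projectionOnto_apply_left] at h2
    have hSbot : S = ⊥ := by
      rw [Submodule.eq_bot_iff]
      intro y hy
      have hz := bass hproj hStop (⟨y, hy⟩ : ↥S)
      simpa using congrArg Subtype.val hz
    rw [hSbot] at hcompl
    have := codisjoint_iff.1 hcompl.codisjoint
    simpa using this
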